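/- arXiv:1808.07722 — 4 statements merged into one kernel-verified Lean document; each statement's English description precedes it below -/
import Mathlib

section
/- For a fixed generating set, the set of letters (generators) appearing in any word representing a given element of an Artin monoid is independent of the chosen word representative; that is, the notion of 'letters appearing in an element' is well defined. -/
namespace ArtinStmt

/-- The alternating word π(s,t;k) = stst... of length k in the free monoid. -/
def altWord {S : Type*} (s t : S) : ℕ → FreeMonoid S
  | 0 => 1
  | n + 1 => FreeMonoid.of s * altWord t s n

/-- The braid/Artin relations coming from a Coxeter-type matrix `M`
(with `M s t = 0` encoding `∞`, i.e. no relation). -/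
def artinRel {S : Type*} (M : S → S → ℕ) (x y : FreeMonoid S) : Prop :=
  ∃ s t, s ≠ t ∧ M s t ≠ 0 ∧ x = altWord s t (M s t) ∧ y = altWord t s (M s t)

/-- The congruence on the free monoid generated by the Artin relations. -/
def artinCon {S : Type*} (M : S → S → ℕ) : Con (FreeMonoid S) := conGen (artinRel M)

/-- The Artin monoid associated to the matrix `M`. -/
abbrev ArtinMonoid {S : Type*} (M : S → S → ℕ) := (artinCon M).Quotient

/-- The generator σ_s of the Artin monoid. -/
def gen {S : Type*} (M : S → S → ℕ) (s : S) : ArtinMonoid M := (artinCon M).mk' (FreeMonoid.of s)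

/-- Right-divisibility: `a ⪯R b` iff `b = c * a` for some `c`. -/
def RDvd {A : Type*} [Monoid A] (a b : A) : Prop := ∃ c, b = c * a

/-- The parabolic submonoid generated by the generators indexed by `T`. -/
def parabolic {S : Type*} (M : S → S → ℕ) (T : Set S) : Submonoid (ArtinMonoid M) :=
  Submonoid.closure { x | ∃ s ∈ T, x = gen M s }


lemma mem_altWord {S : Type*} : ∀ (n : ℕ) (s t x : S),
    x ∈ FreeMonoid.toList (altWord s t n) ↔ (x = s ∧ 1 ≤ n) ∨ (x = t ∧ 2 ≤ n) := by
  intro n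
  induction n with
  | zero => intro s t x; simp [altWord, FreeMonoid.toList_one]
  | succ n ih =>
    intro s t x
    have : FreeMonoid.toList (altWord s t (n+1)) = s :: FreeMonoid.toList (altWord t s n) := rfl
    rw [this]
    simp only [List.mem_cons, ih t s x]
    constructor
    · rintro (rfl | ⟨rfl, h⟩ | ⟨rfl, h⟩)
      · exact Or.inl ⟨rfl, by omega⟩
      · exact Or.inr ⟨rfl, by omega⟩
      · exact Or.inl ⟨rfl, by omega⟩
    · rintro (⟨rfl, h⟩ | ⟨rfl, h⟩)
      · exact Or.inl rfl
      · exact Or.inr (Or.inl ⟨rfl, by omega⟩)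

/-- The set of letters appearing in an element of an Artin monoid is
independent of the chosen word representative: there is a well-defined
"letters" function on the Artin monoid. -/
theorem artin_letters_well_defined {S : Type*} (M : S → S → ℕ)
    (hsym : ∀ s t, M s t = M t s)
    (hM : ∀ s t, s ≠ t → M s t = 0 ∨ 2 ≤ M s t) :
    ∃ L : ArtinMonoid M → Set S,
      ∀ w : FreeMonoid S, L ((artinCon M).mk' w) = {s | s ∈ FreeMonoid.toList w} := by
  classical
  set f : FreeMonoid S → Set S := fun w => {s | s ∈ FreeMonoid.toList w} with hf
  have key : ∀ a b, artinCon M a b → f a = f b := by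
    intro a b h
    induction h with
    | of x y hxy =>
      obtain ⟨s, t, hst, hm, rfl, rfl⟩ := hxy
      have h2 : 2 ≤ M s t := (hM s t hst).resolve_left hm
      ext x
      simp only [hf, Set.mem_setOf_eq, mem_altWord]
      constructor
      · rintro (⟨rfl, _⟩ | ⟨rfl, _⟩)
        · exact Or.inr ⟨rfl, h2⟩
        · exact Or.inl ⟨rfl, by omega⟩
      · rintro (⟨rfl, _⟩ | ⟨rfl, _⟩)
        · exact Or.inr ⟨rfl, h2⟩
        · exact Or.inl ⟨rfl, by omega⟩
    | refl x => rfl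
    | symm _ ih => exact ih.symm
    | trans _ _ ih1 ih2 => exact ih1.trans ih2
    | mul _ _ ih1 ih2 =>
      ext x
      simp only [hf, Set.mem_setOf_eq, FreeMonoid.toList_mul, List.mem_append]
      constructor
      · rintro (h | h)
        · exact Or.inl ((Set.ext_iff.mp ih1 x).mp h)
        · exact Or.inr ((Set.ext_iff.mp ih2 x).mp h)
      · rintro (h | h)
        · exact Or.inl ((Set.ext_iff.mp ih1 x).mpr h)
        · exact Or.inr ((Set.ext_iff.mp ih2 x).mpr h)
  exact ⟨Quotient.lift f (fun a b h => key a b h), fun w => rfl⟩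


end ArtinStmt
end

section
/- In the positive braid monoid, let a = σ_k σ_{k−1} ⋯ σ_{j+1} with k > j. Then the least common multiple of a and σ_j with respect to right-divisibility is Δ(a, σ_j) = a σ_j a. -/
namespace ArtinStmt

/-- The Coxeter matrix of type A: m(i,j) = 3 for adjacent indices, 2 otherwise. -/
def braidM : ℕ → ℕ → ℕ := fun i j =>
  if i = j then 1 else if i + 1 = j ∨ j + 1 = i then 3 else 2

/-- The positive braid monoid (type A Artin monoid). -/
abbrev BraidMonoid := ArtinMonoid braidM

/-- The braid generator σ_i. -/
def bσ (i : ℕ) : BraidMonoid := gen braidM i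

/-- The descending product σ_k σ_{k-1} ⋯ σ_j (equal to 1 if k < j). -/
def bdesc (k j : ℕ) : BraidMonoid := ((List.range' j (k + 1 - j)).reverse.map bσ).prod


namespace Braid

abbrev FM := FreeMonoid ℕ

def rel : FM → FM → Prop := artinRel braidM

def mk : FM →* BraidMonoid := (artinCon braidM).mk'

lemma mk_of (i : ℕ) : mk (FreeMonoid.of i) = bσ i := rfl

def adj (a b : ℕ) : Prop := a + 1 = b ∨ b + 1 = a

instance : DecidablePred (fun p : ℕ × ℕ => adj p.1 p.2) := fun _ => instDecidableOr

def dist (a b : ℕ) : Prop := a ≠ b ∧ ¬ adj a b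

lemma adj.symm {a b : ℕ} (h : adj a b) : adj b a := h.elim Or.inr Or.inl
lemma adj.ne {a b : ℕ} (h : adj a b) : a ≠ b := by rcases h with h | h <;> omega
lemma dist.symm {a b : ℕ} (h : dist a b) : dist b a :=
  ⟨h.1.symm, fun hc => h.2 hc.symm⟩

lemma braidM_adj {a b : ℕ} (h : adj a b) : braidM a b = 3 := by
  unfold braidM; rw [if_neg (adj.ne h), if_pos (show a+1=b ∨ b+1=a from h)]

lemma braidM_dist {a b : ℕ} (h : dist a b) : braidM a b = 2 := by
  unfold braidM; rw [if_neg h.1, if_neg (show ¬(a+1=b ∨ b+1=a) from h.2)]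

lemma mk_rel {u v : FM} (h : rel u v) : mk u = mk v :=
  Con.eq _ |>.2 (ConGen.Rel.of _ _ h)

lemma rel_braid {a b : ℕ} (h : adj a b) :
    rel (FreeMonoid.of a * (FreeMonoid.of b * (FreeMonoid.of a * 1)))
        (FreeMonoid.of b * (FreeMonoid.of a * (FreeMonoid.of b * 1))) := by
  refine ⟨a, b, adj.ne h, ?_, ?_, ?_⟩ <;>
    simp [braidM_adj h, braidM_adj h.symm, altWord]

lemma rel_comm {a b : ℕ} (h : dist a b) :
    rel (FreeMonoid.of a * (FreeMonoid.of b * 1))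
        (FreeMonoid.of b * (FreeMonoid.of a * 1)) := by
  refine ⟨a, b, h.1, ?_, ?_, ?_⟩ <;>
    simp [braidM_dist h, braidM_dist h.symm, altWord]

lemma braid {a b : ℕ} (h : adj a b) : bσ a * (bσ b * bσ a) = bσ b * (bσ a * bσ b) := by
  have := mk_rel (rel_braid h)
  simpa [mk_of] using this

lemma comm {a b : ℕ} (h : dist a b) : bσ a * bσ b = bσ b * bσ a := by
  have := mk_rel (rel_comm h)
  simpa [mk_of] using this

end Braid

namespace Braid

lemma rel.symm {u v : FM} (h : rel u v) : rel v u := by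
  obtain ⟨s, t, hst, hM, hu, hv⟩ := h
  have hsym : braidM t s = braidM s t := by
    unfold braidM; by_cases h1 : s = t
    · simp [h1]
    · rw [if_neg h1, if_neg (Ne.symm h1)]
      by_cases h2 : s + 1 = t ∨ t + 1 = s
      · rw [if_pos h2, if_pos (Or.symm h2)]
      · rw [if_neg h2, if_neg (fun hc => h2 (Or.symm hc))]
  exact ⟨t, s, Ne.symm hst, by rw [hsym]; exact hM, by rw [hsym]; exact hv,
    by rw [hsym]; exact hu⟩

def step (x y : FM) : Prop := ∃ p u v q, rel u v ∧ x = p * u * q ∧ y = p * v * q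

lemma step.symm {x y : FM} (h : step x y) : step y x := by
  obtain ⟨p, u, v, q, hr, hx, hy⟩ := h
  exact ⟨p, v, u, q, hr.symm, hy, hx⟩

inductive steps : ℕ → FM → FM → Prop
  | refl (w) : steps 0 w w
  | head {w w₁ w' : FM} {n : ℕ} : step w w₁ → steps n w₁ w' → steps (n + 1) w w'

lemma steps.snoc {n : ℕ} {x y z : FM} (h : steps n x y) (h2 : step y z) :
    steps (n + 1) x z := by
  induction h with
  | refl w => exact steps.head h2 (steps.refl _)
  | head s _ ih => exact steps.head s (ih h2)

lemma steps.symm {n : ℕ} {x y : FM} (h : steps n x y) : steps n y x := by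
  induction h with
  | refl w => exact steps.refl _
  | head s _ ih => exact ih.snoc s.symm

lemma steps.trans {m n : ℕ} {x y z : FM} (h1 : steps m x y) (h2 : steps n y z) :
    steps (m + n) x z := by
  induction h1 with
  | refl w => simpa using h2
  | head s _ ih => have := steps.head s (ih h2); simpa [Nat.add_right_comm] using this

lemma step.mul_compat {x y a b : FM} (h : step x y) : step (a * x * b) (a * y * b) := by
  obtain ⟨p, u, v, q, hr, hx, hy⟩ := h
  exact ⟨a * p, u, v, q * b, hr, by rw [hx]; simp [mul_assoc], by rw [hy]; simp [mul_assoc]⟩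

lemma steps.mul_compat {n : ℕ} {x y : FM} (a b : FM) (h : steps n x y) :
    steps n (a * x * b) (a * y * b) := by
  induction h with
  | refl w => exact steps.refl _
  | head s _ ih => exact steps.head s.mul_compat ih

def chain (x y : FM) : Prop := ∃ n, steps n x y

lemma chain.refl (x : FM) : chain x x := ⟨0, steps.refl _⟩
lemma chain.symm {x y : FM} (h : chain x y) : chain y x := h.imp fun _ h => h.symm
lemma chain.trans {x y z : FM} (h1 : chain x y) (h2 : chain y z) : chain x z := by
  obtain ⟨m, h1⟩ := h1; obtain ⟨n, h2⟩ := h2; exact ⟨m + n, h1.trans h2⟩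
lemma chain.mul {x y z w : FM} (h1 : chain x y) (h2 : chain z w) : chain (x * z) (y * w) := by
  obtain ⟨m, h1⟩ := h1; obtain ⟨n, h2⟩ := h2
  refine ⟨m + n, steps.trans (y := y * z) ?_ ?_⟩
  · simpa using h1.mul_compat 1 z
  · simpa [mul_assoc] using h2.mul_compat y 1

lemma eqv_iff {x y : FM} : mk x = mk y ↔ chain x y := by
  constructor
  · intro h
    have hc : conGen rel x y := (Con.eq _).1 h
    clear h
    induction hc with
    | of u v hr => exact ⟨1, steps.head ⟨1, u, v, 1, hr, by simp, by simp⟩ (steps.refl _)⟩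
    | refl w => exact chain.refl _
    | symm _ ih => exact ih.symm
    | trans _ _ ih1 ih2 => exact ih1.trans ih2
    | mul _ _ ih1 ih2 => exact ih1.mul ih2
  · rintro ⟨n, h⟩
    induction h with
    | refl w => rfl
    | head s _ ih =>
      obtain ⟨p, u, v, q, hr, hx, hy⟩ := s
      rw [hx, ← ih, hy]
      simp only [map_mul, mk_rel hr]

end Braid
namespace Braid

lemma altWord_length {S : Type*} (n : ℕ) : ∀ s t : S, (altWord s t n).length = n := by
  induction n with
  | zero => intro s t; rfl
  | succ n ih =>
    intro s t
    show (FreeMonoid.of s * altWord t s n).length = n + 1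
    rw [FreeMonoid.length_mul, FreeMonoid.length_of, ih]
    omega

lemma rel_length {u v : FM} (h : rel u v) : u.length = v.length := by
  obtain ⟨s, t, _, _, hu, hv⟩ := h
  rw [hu, hv, altWord_length, altWord_length]

lemma step_length {x y : FM} (h : step x y) : x.length = y.length := by
  obtain ⟨p, u, v, q, hr, hx, hy⟩ := h
  rw [hx, hy]; simp only [FreeMonoid.length_mul, rel_length hr]

/-- Length descends to the quotient. -/
def lenHom : BraidMonoid →* Multiplicative ℕ :=
  Con.lift _ (FreeMonoid.lift fun _ => Multiplicative.ofAdd 1) (by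
    rw [artinCon]
    apply Con.conGen_le.2
    intro u v hr
    have hlen : ∀ w : FM, (FreeMonoid.lift fun _ : ℕ => Multiplicative.ofAdd 1) w
        = Multiplicative.ofAdd w.length := by
      intro w
      induction w using FreeMonoid.recOn with
      | one => rfl
      | of_mul a w ihw =>
        rw [map_mul, ihw, FreeMonoid.lift_eval_of, FreeMonoid.length_mul, FreeMonoid.length_of]
        rfl
    show Con.ker _ u v
    simp only [Con.ker_rel, hlen, rel_length hr])

def bLen (x : BraidMonoid) : ℕ := Multiplicative.toAdd (lenHom x)

lemma bLen_mul (x y : BraidMonoid) : bLen (x * y) = bLen x + bLen y := by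
  unfold bLen; rw [map_mul]; rfl

lemma bLen_mk (w : FM) : bLen (mk w) = w.length := by
  unfold bLen lenHom mk
  rw [Con.lift_mk']
  have hlen : ∀ w : FM, (FreeMonoid.lift fun _ : ℕ => Multiplicative.ofAdd 1) w
      = Multiplicative.ofAdd w.length := by
    intro w
    induction w using FreeMonoid.recOn with
    | one => rfl
    | of_mul a w ihw =>
      rw [map_mul, ihw, FreeMonoid.lift_eval_of, FreeMonoid.length_mul, FreeMonoid.length_of]
      rfl
  rw [hlen]; rfl

lemma bLen_bσ (i : ℕ) : bLen (bσ i) = 1 := bLen_mk (FreeMonoid.of i)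

instance adj.dec (a b : ℕ) : Decidable (adj a b) := by unfold adj; infer_instance

/-- The complement `C l i`: lcm(σ_i, σ_l) = C l i * σ_i. -/
noncomputable def C (l i : ℕ) : BraidMonoid :=
  if i = l then 1 else if adj i l then bσ i * bσ l else bσ l

lemma C_self (i : ℕ) : C i i = 1 := if_pos rfl
lemma C_adj {i l : ℕ} (h : adj i l) : C l i = bσ i * bσ l := by
  rw [C, if_neg (adj.ne h), if_pos h]
lemma C_dist {i l : ℕ} (h : dist i l) : C l i = bσ l := by
  rw [C, if_neg h.1, if_neg h.2]

end Braid
namespace Braid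

lemma commW {a b : ℕ} (h : dist a b) (w : BraidMonoid) :
    bσ a * (bσ b * w) = bσ b * (bσ a * w) := by
  rw [← mul_assoc, comm h, mul_assoc]

lemma braidW {a b : ℕ} (h : adj a b) (w : BraidMonoid) :
    bσ a * (bσ b * (bσ a * w)) = bσ b * (bσ a * (bσ b * w)) := by
  have hb := braid h
  calc bσ a * (bσ b * (bσ a * w)) = (bσ a * (bσ b * bσ a)) * w := by simp only [mul_assoc]
    _ = (bσ b * (bσ a * bσ b)) * w := by rw [hb]
    _ = bσ b * (bσ a * (bσ b * w)) := by simp only [mul_assoc]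

lemma C_comm {a i l : ℕ} (hai : dist a i) (hal : dist a l) :
    C l i * bσ a = bσ a * C l i := by
  by_cases h : i = l
  · subst h; rw [C_self]; rw [one_mul, mul_one]
  · by_cases h2 : adj i l
    · rw [C_adj h2, mul_assoc, comm hal.symm, ← mul_assoc, comm hai.symm, mul_assoc]
    · rw [C_dist ⟨h, h2⟩, comm hal.symm]

def GOOD (L : ℕ) : Prop :=
  ∀ x y : BraidMonoid, ∀ i l : ℕ, bLen x + 1 ≤ L → x * bσ i = y * bσ l →
    ∃ Z, x = Z * C l i ∧ y = Z * C i l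

lemma B1 {M : ℕ} (G : GOOD M) {P Z y : BraidMonoid} {a i l : ℕ}
    (hai : dist a i) (hM : bLen P + 1 ≤ M)
    (h1 : P * bσ i = Z * C l a) (h2 : y = Z * C a l) :
    ∃ Z', P * bσ a = Z' * C l i ∧ y = Z' * C i l := by
  by_cases hal : a = l
  · subst hal
    rw [C_self, mul_one] at h1 h2
    refine ⟨P, ?_, ?_⟩
    · rw [C_dist hai.symm]
    · rw [C_dist hai, h2, h1]
  · by_cases hadj : adj a l
    · rw [C_adj hadj] at h1
      rw [C_adj hadj.symm] at h2
      have hbZ : bLen Z + 2 = bLen P + 1 := by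
        have := congrArg bLen h1
        simp only [bLen_mul, bLen_bσ] at this; omega
      obtain ⟨Z₂, k1, k2⟩ := G P (Z * bσ a) i l (by omega) (by rw [h1, mul_assoc])
      by_cases hil : i = l
      · exact absurd (hil ▸ hadj) hai.2
      · by_cases hil2 : adj i l
        · rw [C_adj hil2] at k1
          rw [C_adj hil2.symm] at k2
          have hbZ2 : bLen Z₂ + 2 = bLen P := by
            have := congrArg bLen k1
            simp only [bLen_mul, bLen_bσ] at this; omega
          obtain ⟨Z₃, m1, m2⟩ := G Z (Z₂ * bσ l) a i (by omega) (by rw [k2, mul_assoc])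
          rw [C_dist hai] at m1
          rw [C_dist hai.symm] at m2
          have hbZ3 : bLen Z₂ + 1 ≤ M := by omega
          obtain ⟨Z₄, n1, n2⟩ := G Z₂ Z₃ l a (by omega) m2
          rw [C_adj hadj.symm] at n1
          rw [C_adj hadj] at n2
          refine ⟨Z₄ * (bσ i * (bσ l * bσ a)), ?_, ?_⟩
          · rw [C_adj hil2]
            calc P * bσ a
                = Z₄ * (bσ l * (bσ a * (bσ i * (bσ l * bσ a)))) := by
                    rw [k1, n1]; simp only [mul_assoc]
              _ = Z₄ * (bσ l * (bσ i * (bσ a * (bσ l * bσ a)))) := by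
                    rw [commW hai (bσ l * bσ a)]
              _ = Z₄ * (bσ l * (bσ i * (bσ l * (bσ a * bσ l)))) := by
                    rw [braid hadj]
              _ = Z₄ * (bσ i * (bσ l * (bσ i * (bσ a * bσ l)))) := by
                    rw [braidW hil2.symm (bσ a * bσ l)]
              _ = Z₄ * (bσ i * (bσ l * (bσ a * (bσ i * bσ l)))) := by
                    rw [commW hai.symm (bσ l)]
              _ = Z₄ * (bσ i * (bσ l * bσ a)) * (bσ i * bσ l) := by simp only [mul_assoc]
          · rw [C_adj hil2.symm]
            calc y
                = Z₄ * (bσ a * (bσ l * (bσ i * (bσ l * bσ a)))) := by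
                    rw [h2, m1, n2]; simp only [mul_assoc]
              _ = Z₄ * (bσ a * (bσ i * (bσ l * (bσ i * bσ a)))) := by
                    rw [braidW hil2.symm (bσ a)]
              _ = Z₄ * (bσ i * (bσ a * (bσ l * (bσ i * bσ a)))) := by
                    rw [commW hai (bσ l * (bσ i * bσ a))]
              _ = Z₄ * (bσ i * (bσ a * (bσ l * (bσ a * bσ i)))) := by
                    rw [comm hai.symm]
              _ = Z₄ * (bσ i * (bσ l * (bσ a * (bσ l * bσ i)))) := by
                    rw [braidW hadj (bσ i)]
              _ = Z₄ * (bσ i * (bσ l * bσ a)) * (bσ l * bσ i) := by simp only [mul_assoc]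
        · have hdil : dist i l := ⟨hil, hil2⟩
          rw [C_dist hdil] at k1
          rw [C_dist hdil.symm] at k2
          obtain ⟨Z₃, m1, m2⟩ := G Z Z₂ a i (by omega) k2
          rw [C_dist hai] at m1
          rw [C_dist hai.symm] at m2
          refine ⟨Z₃ * (bσ l * bσ a), ?_, ?_⟩
          · rw [C_dist hdil]
            calc P * bσ a = Z₃ * (bσ a * (bσ l * bσ a)) := by
                  rw [k1, m2]; simp only [mul_assoc]
              _ = Z₃ * (bσ l * (bσ a * bσ l)) := by rw [braid hadj]
              _ = Z₃ * (bσ l * bσ a) * bσ l := by simp only [mul_assoc]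
          · rw [C_dist hdil.symm]
            calc y = Z₃ * (bσ i * (bσ l * bσ a)) := by
                  rw [h2, m1]; simp only [mul_assoc]
              _ = Z₃ * (bσ l * (bσ i * bσ a)) := by rw [commW hdil (bσ a)]
              _ = Z₃ * (bσ l * (bσ a * bσ i)) := by rw [comm hai.symm]
              _ = Z₃ * (bσ l * bσ a) * bσ i := by simp only [mul_assoc]
    · have hdal : dist a l := ⟨hal, hadj⟩
      rw [C_dist hdal] at h1
      rw [C_dist hdal.symm] at h2
      obtain ⟨Z₂, k1, k2⟩ := G P Z i l (by omega) h1
      refine ⟨Z₂ * bσ a, ?_, ?_⟩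
      · rw [k1, mul_assoc, C_comm hai hdal, ← mul_assoc]
      · rw [h2, k2, mul_assoc, C_comm hdal hai, ← mul_assoc]
  
end Braid
namespace Braid

lemma B2 {M : ℕ} (G : GOOD M) {P Z y : BraidMonoid} {a b l : ℕ}
    (hab : adj a b) (hM : bLen P + 2 ≤ M)
    (h1 : P * bσ b * bσ a = Z * C l b) (h2 : y = Z * C b l) :
    ∃ Z', P * (bσ a * bσ b) = Z' * C l a ∧ y = Z' * C a l := by
  by_cases hbl : b = l
  · subst hbl
    rw [C_self, mul_one] at h1 h2
    refine ⟨P, ?_, ?_⟩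
    · rw [C_adj hab, ← mul_assoc]
    · rw [C_adj hab.symm, h2, ← h1, mul_assoc]
  · by_cases hbl2 : adj b l
    · -- b, l adjacent
      rw [C_adj hbl2] at h1
      rw [C_adj hbl2.symm] at h2
      have hbZ : bLen Z + 2 = bLen P + 2 := by
        have := congrArg bLen h1
        simp only [bLen_mul, bLen_bσ] at this; omega
      by_cases hal : a = l
      · subst hal
        obtain ⟨Z₂, k1, k2⟩ := G (P * bσ b) (Z * bσ b) a a
          (by simp only [bLen_mul, bLen_bσ]; omega)
          (by rw [h1]; simp only [mul_assoc])
        rw [C_self, mul_one] at k1 k2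
        obtain ⟨Z₃, m1, m2⟩ := G P Z b b (by omega) (by rw [k1, k2])
        rw [C_self, mul_one] at m1 m2
        refine ⟨P * (bσ a * bσ b), ?_, ?_⟩
        · rw [C_self, mul_one]
        · rw [C_self, mul_one, h2, m2, ← m1]
      · have hdal : dist a l := by
          refine ⟨hal, ?_⟩
          rcases hab with h | h <;> rcases hbl2 with h' | h' <;>
            (intro hc; rcases hc with hc | hc <;> omega)
        obtain ⟨Z₂, k1, k2⟩ := G (P * bσ b) (Z * bσ b) a l
          (by simp only [bLen_mul, bLen_bσ]; omega)
          (by rw [h1]; simp only [mul_assoc])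
        rw [C_dist hdal] at k1
        rw [C_dist hdal.symm] at k2
        have hbZ2 : bLen Z₂ = bLen P := by
          have := congrArg bLen k1
          simp only [bLen_mul, bLen_bσ] at this; omega
        obtain ⟨Z₃, m1, m2⟩ := G P Z₂ b l (by omega) k1
        rw [C_adj hbl2] at m1
        rw [C_adj hbl2.symm] at m2
        obtain ⟨Z₄, n1, n2⟩ := G Z Z₂ b a (by omega) k2
        rw [C_adj hab.symm] at n1
        rw [C_adj hab] at n2
        have hbZ3 : bLen Z₃ + 2 = bLen P := by
          have := congrArg bLen m1
          simp only [bLen_mul, bLen_bσ] at this; omega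
        obtain ⟨Zq, q1, q2⟩ := G (Z₃ * bσ l) (Z₄ * bσ a) b b
          (by simp only [bLen_mul, bLen_bσ]; omega)
          (by
            have e1 : Z₃ * bσ l * bσ b = Z₂ := by rw [m2, mul_assoc]
            have e2 : Z₄ * bσ a * bσ b = Z₂ := by rw [n2, mul_assoc]
            rw [e1, e2])
        rw [C_self, mul_one] at q1 q2
        obtain ⟨Z₅, r1, r2⟩ := G Z₃ Z₄ l a (by omega) (by rw [q1, q2])
        rw [C_dist hdal.symm] at r1
        rw [C_dist hdal] at r2
        refine ⟨Z₅ * (bσ b * (bσ a * (bσ l * bσ b))), ?_, ?_⟩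
        · rw [C_dist hdal]
          calc P * (bσ a * bσ b)
              = Z₅ * (bσ a * (bσ b * (bσ l * (bσ a * bσ b)))) := by
                rw [m1, r1]; simp only [mul_assoc]
            _ = Z₅ * (bσ a * (bσ b * (bσ a * (bσ l * bσ b)))) := by
                rw [commW hdal.symm (bσ b)]
            _ = Z₅ * (bσ b * (bσ a * (bσ b * (bσ l * bσ b)))) := by
                rw [braidW hab (bσ l * bσ b)]
            _ = Z₅ * (bσ b * (bσ a * (bσ l * (bσ b * bσ l)))) := by
                rw [braid hbl2]
            _ = Z₅ * (bσ b * (bσ a * (bσ l * bσ b))) * bσ l := by simp only [mul_assoc]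
        · rw [C_dist hdal.symm]
          calc y
              = Z₅ * (bσ l * (bσ b * (bσ a * (bσ l * bσ b)))) := by
                rw [h2, n1, r2]; simp only [mul_assoc]
            _ = Z₅ * (bσ l * (bσ b * (bσ l * (bσ a * bσ b)))) := by
                rw [commW hdal (bσ b)]
            _ = Z₅ * (bσ b * (bσ l * (bσ b * (bσ a * bσ b)))) := by
                rw [braidW hbl2.symm (bσ a * bσ b)]
            _ = Z₅ * (bσ b * (bσ l * (bσ a * (bσ b * bσ a)))) := by
                rw [braid hab.symm]
            _ = Z₅ * (bσ b * (bσ a * (bσ l * (bσ b * bσ a)))) := by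
                rw [commW hdal.symm (bσ b * bσ a)]
            _ = Z₅ * (bσ b * (bσ a * (bσ l * bσ b))) * bσ a := by simp only [mul_assoc]
    · have hdbl : dist b l := ⟨hbl, hbl2⟩
      rw [C_dist hdbl] at h1
      rw [C_dist hdbl.symm] at h2
      by_cases hal : a = l
      · exact absurd (hal ▸ hab : adj l b).symm hdbl.2
      · by_cases hal2 : adj a l
        · obtain ⟨Z₂, k1, k2⟩ := G (P * bσ b) Z a l
            (by simp only [bLen_mul, bLen_bσ]; omega) h1
          rw [C_adj hal2] at k1
          rw [C_adj hal2.symm] at k2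
          obtain ⟨Z₃, m1, m2⟩ := G P (Z₂ * bσ a) b l (by omega)
            (by rw [k1]; simp only [mul_assoc])
          rw [C_dist hdbl] at m1
          rw [C_dist hdbl.symm] at m2
          have hbZ2 : bLen Z₂ + 1 = bLen P := by
            have := congrArg bLen m2
            have h' := congrArg bLen m1
            simp only [bLen_mul, bLen_bσ] at this h'; omega
          obtain ⟨Z₄, n1, n2⟩ := G Z₂ Z₃ a b (by omega) m2
          rw [C_adj hab] at n1
          rw [C_adj hab.symm] at n2
          refine ⟨Z₄ * (bσ l * (bσ a * bσ b)), ?_, ?_⟩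
          · rw [C_adj hal2]
            calc P * (bσ a * bσ b)
                = Z₄ * (bσ b * (bσ a * (bσ l * (bσ a * bσ b)))) := by
                  rw [m1, n2]; simp only [mul_assoc]
              _ = Z₄ * (bσ b * (bσ l * (bσ a * (bσ l * bσ b)))) := by
                  rw [braidW hal2 (bσ b)]
              _ = Z₄ * (bσ l * (bσ b * (bσ a * (bσ l * bσ b)))) := by
                  rw [commW hdbl.symm (bσ a * (bσ l * bσ b))]
              _ = Z₄ * (bσ l * (bσ b * (bσ a * (bσ b * bσ l)))) := by
                  rw [comm hdbl]
              _ = Z₄ * (bσ l * (bσ a * (bσ b * (bσ a * bσ l)))) := by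
                  rw [braidW hab.symm (bσ l)]
              _ = Z₄ * (bσ l * (bσ a * bσ b)) * (bσ a * bσ l) := by simp only [mul_assoc]
          · rw [C_adj hal2.symm]
            calc y
                = Z₄ * (bσ a * (bσ b * (bσ l * (bσ a * bσ b)))) := by
                  rw [h2, k2, n1]; simp only [mul_assoc]
              _ = Z₄ * (bσ a * (bσ l * (bσ b * (bσ a * bσ b)))) := by
                  rw [commW hdbl (bσ a * bσ b)]
              _ = Z₄ * (bσ a * (bσ l * (bσ a * (bσ b * bσ a)))) := by
                  rw [braid hab]
              _ = Z₄ * (bσ l * (bσ a * (bσ l * (bσ b * bσ a)))) := by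
                  rw [braidW hal2 (bσ b * bσ a)]
              _ = Z₄ * (bσ l * (bσ a * (bσ b * (bσ l * bσ a)))) := by
                  rw [commW hdbl.symm (bσ a)]
              _ = Z₄ * (bσ l * (bσ a * bσ b)) * (bσ l * bσ a) := by simp only [mul_assoc]
        · have hdal : dist a l := ⟨hal, hal2⟩
          obtain ⟨Z₂, k1, k2⟩ := G (P * bσ b) Z a l
            (by simp only [bLen_mul, bLen_bσ]; omega) h1
          rw [C_dist hdal] at k1
          rw [C_dist hdal.symm] at k2
          obtain ⟨Z₃, m1, m2⟩ := G P Z₂ b l (by omega) k1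
          rw [C_dist hdbl] at m1
          rw [C_dist hdbl.symm] at m2
          refine ⟨Z₃ * (bσ a * bσ b), ?_, ?_⟩
          · rw [C_dist hdal]
            calc P * (bσ a * bσ b)
                = Z₃ * (bσ l * (bσ a * bσ b)) := by rw [m1]; simp only [mul_assoc]
              _ = Z₃ * (bσ a * (bσ l * bσ b)) := by rw [commW hdal.symm (bσ b)]
              _ = Z₃ * (bσ a * (bσ b * bσ l)) := by rw [comm hdbl.symm]
              _ = Z₃ * (bσ a * bσ b) * bσ l := by simp only [mul_assoc]
          · rw [C_dist hdal.symm]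
            calc y
                = Z₃ * (bσ b * (bσ a * bσ b)) := by rw [h2, k2, m2]; simp only [mul_assoc]
              _ = Z₃ * (bσ a * (bσ b * bσ a)) := by rw [braid hab.symm]
              _ = Z₃ * (bσ a * bσ b) * bσ a := by simp only [mul_assoc]

end Braid
namespace Braid

open FreeMonoid

lemma concat_cases (q : FM) : q = 1 ∨ ∃ (q₁ : FM) (a : ℕ), q = q₁ * of a := by
  rcases List.eq_nil_or_concat (toList q) with h | ⟨q₁, a, h⟩
  · left; exact toList.injective h
  · right
    exact ⟨ofList q₁, a, toList.injective (by simp [h, toList_mul, toList_of])⟩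

lemma last_cancel {X Y : FM} {i l : ℕ} (h : X * of i = Y * of l) : X = Y ∧ i = l := by
  have h' : toList X ++ [i] = toList Y ++ [l] := congrArg toList h
  obtain ⟨h1, h2⟩ := List.append_inj' h' rfl
  exact ⟨toList.injective h1, by simpa using h2⟩

lemma rel_cases {u v : FM} (h : rel u v) :
    (∃ s t, dist s t ∧ u = of s * of t ∧ v = of t * of s) ∨
    (∃ s t, adj s t ∧ u = of s * (of t * of s) ∧ v = of t * (of s * of t)) := by
  obtain ⟨s, t, hst, hM, hu, hv⟩ := h
  by_cases hadj : adj s t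
  · right
    refine ⟨s, t, hadj, ?_, ?_⟩
    · rw [hu, braidM_adj hadj]; simp [altWord]
    · rw [hv, braidM_adj hadj]; simp [altWord]
  · left
    have hd : dist s t := ⟨hst, hadj⟩
    refine ⟨s, t, hd, ?_, ?_⟩
    · rw [hu, braidM_dist hd]; simp [altWord]
    · rw [hv, braidM_dist hd]; simp [altWord]

lemma keyW (L : ℕ) (hL : ∀ L', L' < L → GOOD L') :
    ∀ (n : ℕ) (W W' : FM), steps n W W' → W.length ≤ L →
    ∀ (X : FM) (i : ℕ) (Y : FM) (l : ℕ), W = X * of i → W' = Y * of l →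
    ∃ Z, mk X = Z * C l i ∧ mk Y = Z * C i l := by
  intro n W W' hst
  induction hst with
  | refl w =>
    intro _ X i Y l hW hW'
    obtain ⟨hXY, hil⟩ := last_cancel (hW ▸ hW' : X * of i = Y * of l)
    subst hil
    exact ⟨mk X, by rw [C_self, mul_one], by rw [C_self, mul_one, hXY]⟩
  | @head W W₁ W'' n hstep hrest ih =>
    intro hlen X i Y l hW hW'
    have hlen₁ : W₁.length ≤ L := by rw [← step_length hstep]; exact hlen
    obtain ⟨p, u, v, q, hr, hWpq, hW₁⟩ := hstep
    rcases concat_cases q with hq | ⟨q₁, a, hq⟩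
    · -- the rewrite touches the last letter
      subst hq
      rw [mul_one] at hWpq hW₁
      rcases rel_cases hr with ⟨s, t, hd, hu, hv⟩ | ⟨s, t, hadj, hu, hv⟩
      · -- commutation relation : u = s t, i = t, X = p * s
        have hXdec : X = p * of s ∧ t = i := by
          have : (p * of s) * of t = X * of i := by
            rw [mul_assoc, ← hu, ← hWpq, hW]
          exact ⟨(last_cancel this).1.symm, (last_cancel this).2⟩
        obtain ⟨hX, hti⟩ := hXdec
        subst hti
        obtain ⟨Z, hZ1, hZ2⟩ := ih hlen₁ (p * of t) s Y l
          (by rw [hW₁, hv, mul_assoc]) hW'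
        have hG : GOOD (L - 1) := hL (L - 1) (by
          have : 1 ≤ W.length := by rw [hW]; simp [FreeMonoid.length_mul]
          omega)
        have hMP : bLen (mk p) + 1 ≤ L - 1 := by
          have : W.length = p.length + 2 := by
            rw [hWpq, hu]; simp [FreeMonoid.length_mul]
          rw [bLen_mk]; omega
        have h1' : mk p * bσ t = Z * C l s := by
          rw [← mk_of, ← map_mul, hZ1]
        obtain ⟨Z', hA, hB⟩ := B1 hG hd hMP h1' hZ2
        refine ⟨Z', ?_, hB⟩
        rw [hX, map_mul, mk_of]
        exact hA
      · -- braid relation : u = s t s, i = s, X = p * s * t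
        have hkey : (p * (of s * of t)) * of s = X * of i := by
          rw [← hW, hWpq, hu]; simp only [mul_assoc]
        obtain ⟨hX, hsi⟩ := last_cancel hkey
        subst hsi
        obtain ⟨Z, hZ1, hZ2⟩ := ih hlen₁ (p * (of t * of s)) t Y l
          (by rw [hW₁, hv]; simp only [mul_assoc]) hW'
        have hG : GOOD (L - 1) := hL (L - 1) (by
          have : 1 ≤ W.length := by rw [hW]; simp [FreeMonoid.length_mul]
          omega)
        have hMP : bLen (mk p) + 2 ≤ L - 1 := by
          have : W.length = p.length + 3 := by
            rw [hWpq, hu]; simp [FreeMonoid.length_mul]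
          rw [bLen_mk]; omega
        have h1' : mk p * bσ t * bσ s = Z * C l t := by
          rw [mul_assoc, ← mk_of t, ← mk_of s, ← map_mul, ← map_mul, hZ1]
        obtain ⟨Z', hA, hB⟩ := B2 hG hadj hMP h1' hZ2
        refine ⟨Z', ?_, hB⟩
        rw [← hX, map_mul, map_mul, mk_of, mk_of]
        exact hA
    · -- the rewrite is inside X
      subst hq
      have hXdec : X = p * u * q₁ ∧ a = i := by
        have : (p * u * q₁) * of a = X * of i := by
          rw [← hW, hWpq]; simp only [mul_assoc]
        exact ⟨(last_cancel this).1.symm, (last_cancel this).2⟩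
      obtain ⟨hX, hai⟩ := hXdec
      subst hai
      obtain ⟨Z, hZ1, hZ2⟩ := ih hlen₁ (p * v * q₁) a Y l
        (by rw [hW₁]; simp only [mul_assoc]) hW'
      refine ⟨Z, ?_, hZ2⟩
      rw [hX, ← hZ1]
      simp only [map_mul, mk_rel hr]

lemma key : ∀ L, GOOD L := by
  intro L
  induction L using Nat.strong_induction_on with
  | _ L hL =>
    intro x y i l hx hxy
    obtain ⟨X, hX⟩ := Con.mk'_surjective x
    obtain ⟨Y, hY⟩ := Con.mk'_surjective y
    have hchain : chain (X * of i) (Y * of l) := by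
      rw [← eqv_iff]
      show mk (X * of i) = mk (Y * of l)
      rw [map_mul, map_mul, mk_of, mk_of]
      show mk X * bσ i = mk Y * bσ l
      rw [show mk X = x from hX, show mk Y = y from hY, hxy]
    obtain ⟨n, hn⟩ := hchain
    have hlen : (X * of i).length ≤ L := by
      have : bLen x = X.length := by rw [← hX]; exact bLen_mk X
      simp only [FreeMonoid.length_mul, FreeMonoid.length_of]
      omega
    obtain ⟨Z, h1, h2⟩ := keyW L hL n (X * of i) (Y * of l) hn hlen X i Y l rfl rfl
    exact ⟨Z, by rw [← hX] at *; exact h1, by rw [← hY] at *; exact h2⟩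

end Braid
namespace Braid

open FreeMonoid

lemma cancel {x y : BraidMonoid} {i : ℕ} (h : x * bσ i = y * bσ i) : x = y := by
  obtain ⟨Z, h1, h2⟩ := key (bLen x + 1) x y i i le_rfl h
  rw [C_self, mul_one] at h1 h2
  rw [h1, h2]

lemma Hdist {x y : BraidMonoid} {i l : ℕ} (h : dist i l) (e : x * bσ i = y * bσ l) :
    ∃ z, x = z * bσ l ∧ y = z * bσ i := by
  obtain ⟨Z, h1, h2⟩ := key (bLen x + 1) x y i l le_rfl e
  rw [C_dist h] at h1
  rw [C_dist h.symm] at h2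
  exact ⟨Z, h1, h2⟩

lemma Hadj {x y : BraidMonoid} {i l : ℕ} (h : adj i l) (e : x * bσ i = y * bσ l) :
    ∃ z, x = z * (bσ i * bσ l) ∧ y = z * (bσ l * bσ i) := by
  obtain ⟨Z, h1, h2⟩ := key (bLen x + 1) x y i l le_rfl e
  rw [C_adj h] at h1
  rw [C_adj h.symm] at h2
  exact ⟨Z, h1, h2⟩

def prodσ (ds : List ℕ) : BraidMonoid := (ds.map bσ).prod

lemma prodσ_nil : prodσ [] = 1 := rfl
lemma prodσ_cons (d : ℕ) (ds : List ℕ) : prodσ (d :: ds) = bσ d * prodσ ds := rfl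
lemma prodσ_append (l1 l2 : List ℕ) : prodσ (l1 ++ l2) = prodσ l1 * prodσ l2 := by
  unfold prodσ; rw [List.map_append, List.prod_append]

lemma cancel_prod (ds : List ℕ) {x y : BraidMonoid}
    (h : x * prodσ ds = y * prodσ ds) : x = y := by
  induction ds generalizing x y with
  | nil => simpa [prodσ_nil] using h
  | cons d ds ih =>
    rw [prodσ_cons, ← mul_assoc, ← mul_assoc] at h
    exact cancel (ih h)

lemma CM {t : ℕ} (ds : List ℕ) (hds : ∀ s ∈ ds, dist t s) :
    ∀ P Q y : BraidMonoid, y = P * bσ t → y = Q * prodσ ds →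
    ∃ R, y = R * bσ t * prodσ ds := by
  induction ds with
  | nil => intro P Q y h1 _; exact ⟨P, by rw [prodσ_nil, mul_one, h1]⟩
  | cons c ds ih =>
    intro P Q y h1 h2
    have hc : dist t c := hds c (by simp)
    obtain ⟨R'', hR⟩ := ih (fun s hs => hds s (by simp [hs])) P (Q * bσ c) y h1
      (by rw [h2, prodσ_cons, mul_assoc])
    have hcan : R'' * bσ t = Q * bσ c := by
      apply cancel_prod ds
      rw [← hR, h2, prodσ_cons]
      simp only [mul_assoc]
    obtain ⟨z, hz1, hz2⟩ := Hdist hc hcan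
    refine ⟨z, ?_⟩
    rw [hR, hz1, prodσ_cons]
    calc z * bσ c * bσ t * prodσ ds = z * (bσ c * bσ t) * prodσ ds := by
          simp only [mul_assoc]
      _ = z * (bσ t * bσ c) * prodσ ds := by rw [comm hc.symm]
      _ = z * bσ t * (bσ c * prodσ ds) := by simp only [mul_assoc]

lemma Llem {s : ℕ} (ds : List ℕ) (hds : ∀ c ∈ ds, dist (s + 1) c)
    {P Q y : BraidMonoid} (h1 : y = P * bσ (s + 1)) (h2 : y = Q * (bσ s * prodσ ds)) :
    ∃ R, y = R * (bσ s * bσ (s + 1)) * (bσ s * prodσ ds) := by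
  have hadj : adj s (s + 1) := Or.inl rfl
  obtain ⟨R', hR⟩ := CM ds hds P (Q * bσ s) y h1 (by rw [h2, mul_assoc])
  have hcan : R' * bσ (s + 1) = Q * bσ s := by
    apply cancel_prod ds
    rw [← hR, h2]
    simp only [mul_assoc]
  obtain ⟨z, hz1, hz2⟩ := Hadj hadj.symm hcan
  refine ⟨z, ?_⟩
  rw [hR, hz1]
  calc z * (bσ (s+1) * bσ s) * bσ (s+1) * prodσ ds
      = z * (bσ (s+1) * (bσ s * bσ (s+1))) * prodσ ds := by simp only [mul_assoc]
    _ = z * (bσ s * (bσ (s+1) * bσ s)) * prodσ ds := by rw [← braid hadj]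
    _ = z * (bσ s * bσ (s + 1)) * (bσ s * prodσ ds) := by simp only [mul_assoc]

end Braid
namespace Braid

/-- Descending run σ_{j+m} ⋯ σ_{j+1}. -/
def A (j m : ℕ) : BraidMonoid := prodσ ((List.range' (j + 1) m).reverse)

lemma A_zero (j : ℕ) : A j 0 = 1 := rfl

lemma A_succ (j m : ℕ) : A j (m + 1) = bσ (j + 1 + m) * A j m := by
  unfold A
  rw [List.range'_1_concat, List.reverse_append, List.reverse_cons, List.reverse_nil,
    List.nil_append, List.singleton_append, prodσ_cons]

lemma dist_of_lt {c t : ℕ} (h : c + 2 ≤ t) : dist t c := by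
  constructor
  · omega
  · intro hc; rcases hc with hc | hc <;> omega

lemma dist_of_lt' {c t : ℕ} (h : c + 2 ≤ t) : dist c t := (dist_of_lt h).symm

lemma comm_A {j m t : ℕ} (h : j + m + 2 ≤ t) : bσ t * A j m = A j m * bσ t := by
  induction m with
  | zero => rw [A_zero, mul_one, one_mul]
  | succ m ih =>
    rw [A_succ, ← mul_assoc, comm (dist_of_lt (by omega)), mul_assoc,
      ih (by omega), ← mul_assoc]

lemma swap_I (j m : ℕ) (hm : 1 ≤ m) :
    bσ (j + m) * A j (m + 1) = A j (m + 1) * bσ (j + m + 1) := by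
  obtain ⟨m', rfl⟩ : ∃ m', m = m' + 1 := ⟨m - 1, by omega⟩
  have e1 : A j (m' + 2) = bσ (j + 1 + (m' + 1)) * (bσ (j + 1 + m') * A j m') := by
    rw [A_succ, A_succ]
  have hadj : adj (j + m' + 1) (j + m' + 2) := Or.inl rfl
  have h1 : j + 1 + (m' + 1) = j + m' + 2 := by omega
  have h2 : j + 1 + m' = j + m' + 1 := by omega
  rw [e1, h1, h2]
  calc bσ (j + (m' + 1)) * (bσ (j + m' + 2) * (bσ (j + m' + 1) * A j m'))
      = bσ (j + m' + 1) * (bσ (j + m' + 2) * (bσ (j + m' + 1) * A j m')) := by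
        rw [show j + (m' + 1) = j + m' + 1 by omega]
    _ = bσ (j + m' + 2) * (bσ (j + m' + 1) * (bσ (j + m' + 2) * A j m')) := by
        rw [braidW hadj]
    _ = bσ (j + m' + 2) * (bσ (j + m' + 1) * (A j m' * bσ (j + m' + 2))) := by
        rw [comm_A (by omega)]
    _ = bσ (j + m' + 2) * (bσ (j + m' + 1) * A j m') * bσ (j + (m' + 1) + 1) := by
        rw [show j + (m' + 1) + 1 = j + m' + 2 by omega]; simp only [mul_assoc]

lemma endsj (j m : ℕ) (hm : 1 ≤ m) : ∃ c, A j m * bσ j * A j m = c * bσ j := by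
  induction m with
  | zero => omega
  | succ m ih =>
    by_cases hm1 : 1 ≤ m
    · obtain ⟨c, hc⟩ := ih hm1
      refine ⟨bσ (j + m) * bσ (j + 1 + m) * c, ?_⟩
      have key : A j (m + 1) * bσ j * A j (m + 1)
          = bσ (j + m) * bσ (j + 1 + m) * (A j m * bσ j * A j m) := by
        calc A j (m + 1) * bσ j * A j (m + 1)
            = A j (m + 1) * bσ j * (bσ (j + 1 + m) * A j m) := by rw [A_succ]
          _ = A j (m + 1) * (bσ j * bσ (j + 1 + m)) * A j m := by simp only [mul_assoc]
          _ = A j (m + 1) * (bσ (j + 1 + m) * bσ j) * A j m := by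
              rw [comm (dist_of_lt' (by omega))]
          _ = A j (m + 1) * bσ (j + m + 1) * (bσ j * A j m) := by
              rw [show j + 1 + m = j + m + 1 by omega]; simp only [mul_assoc]
          _ = bσ (j + m) * A j (m + 1) * (bσ j * A j m) := by rw [swap_I j m hm1]
          _ = bσ (j + m) * bσ (j + 1 + m) * (A j m * bσ j * A j m) := by
              rw [A_succ]; simp only [mul_assoc]
      rw [key, hc]
      simp only [mul_assoc]
    · have hm0 : m = 0 := by omega
      subst hm0
      refine ⟨bσ j * bσ (j + 1), ?_⟩
      have : A j 1 = bσ (j + 1) := by rw [A_succ, A_zero, mul_one, Nat.add_zero]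
      rw [this]
      have hadj : adj j (j + 1) := Or.inl rfl
      calc bσ (j + 1) * bσ j * bσ (j + 1) = bσ (j + 1) * (bσ j * bσ (j + 1)) := by
            simp only [mul_assoc]
        _ = bσ j * (bσ (j + 1) * bσ j) := by rw [← braid hadj]
        _ = bσ j * bσ (j + 1) * bσ j := by simp only [mul_assoc]

lemma A_eq_sigma_prod (j m : ℕ) (hm : 1 ≤ m) :
    A j m * bσ j = bσ (j + m) * prodσ ((List.range' (j + 1) (m - 1)).reverse ++ [j]) := by
  obtain ⟨m', rfl⟩ : ∃ m', m = m' + 1 := ⟨m - 1, by omega⟩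
  rw [prodσ_append, A_succ]
  show bσ (j + 1 + m') * A j m' * bσ j = bσ (j + (m' + 1)) * (A j (m' + 1 - 1) * prodσ [j])
  rw [show j + 1 + m' = j + (m' + 1) by omega, show m' + 1 - 1 = m' from rfl,
    prodσ_cons, prodσ_nil, mul_one, mul_assoc]

lemma main (j : ℕ) : ∀ m, 1 ≤ m → ∀ x u v : BraidMonoid,
    x = u * A j m → x = v * bσ j → ∃ w, x = w * (A j m * bσ j * A j m) := by
  intro m
  induction m with
  | zero => omega
  | succ m ih =>
    intro _ x u v hu hv
    by_cases hm1 : 1 ≤ m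
    · -- inductive step
      have hu' : x = (u * bσ (j + 1 + m)) * A j m := by
        rw [hu, A_succ]; simp only [mul_assoc]
      obtain ⟨w, hw⟩ := ih hm1 x (u * bσ (j + 1 + m)) v hu' hv
      have hcan : u * bσ (j + 1 + m) = w * (A j m * bσ j) := by
        apply cancel_prod ((List.range' (j + 1) m).reverse)
        have : prodσ ((List.range' (j + 1) m).reverse) = A j m := rfl
        rw [this, ← hu', hw]
        simp only [mul_assoc]
      -- apply Llem with s := j + m
      have hds : ∀ c ∈ (List.range' (j + 1) (m - 1)).reverse ++ [j], dist (j + m + 1) c := by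
        intro c hc
        rcases List.mem_append.1 hc with hc | hc
        · rw [List.mem_reverse, List.mem_range'_1] at hc
          exact dist_of_lt (by omega)
        · simp only [List.mem_singleton] at hc
          exact dist_of_lt (by omega)
      have h1 : u * bσ (j + 1 + m) = (u : BraidMonoid) * bσ (j + m + 1) := by
        rw [show j + 1 + m = j + m + 1 by omega]
      have h2 : u * bσ (j + 1 + m)
          = w * (bσ (j + m) * prodσ ((List.range' (j + 1) (m - 1)).reverse ++ [j])) := by
        rw [hcan, A_eq_sigma_prod j m hm1]
      obtain ⟨R, hR⟩ := Llem (s := j + m) ((List.range' (j + 1) (m - 1)).reverse ++ [j])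
        hds h1 h2
      refine ⟨R, ?_⟩
      have hAj : bσ (j + m) * prodσ ((List.range' (j + 1) (m - 1)).reverse ++ [j])
          = A j m * bσ j := (A_eq_sigma_prod j m hm1).symm
      calc x = u * bσ (j + 1 + m) * A j m := by rw [hu, A_succ]; simp only [mul_assoc]
        _ = R * (bσ (j + m) * bσ (j + m + 1)) * (A j m * bσ j) * A j m := by
            rw [hR, mul_assoc (R * (bσ (j+m) * bσ (j+m+1))), hAj, ← mul_assoc]
        _ = R * bσ (j + m) * (bσ (j + m + 1) * A j m) * (bσ j * A j m) := by
            simp only [mul_assoc]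
        _ = R * bσ (j + m) * A j (m + 1) * (bσ j * A j m) := by
            rw [show j + m + 1 = j + 1 + m by omega, ← A_succ]
        _ = R * (bσ (j + m) * A j (m + 1)) * (bσ j * A j m) := by simp only [mul_assoc]
        _ = R * (A j (m + 1) * bσ (j + m + 1)) * (bσ j * A j m) := by rw [swap_I j m hm1]
        _ = R * A j (m + 1) * (bσ (j + m + 1) * bσ j) * A j m := by simp only [mul_assoc]
        _ = R * A j (m + 1) * (bσ j * bσ (j + m + 1)) * A j m := by
            rw [comm (dist_of_lt (by omega))]
        _ = R * A j (m + 1) * bσ j * (bσ (j + 1 + m) * A j m) := by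
            rw [show j + m + 1 = j + 1 + m by omega]; simp only [mul_assoc]
        _ = R * (A j (m + 1) * bσ j * A j (m + 1)) := by
            rw [← A_succ]; simp only [mul_assoc]
    · -- base case m = 0
      have hm0 : m = 0 := by omega
      subst hm0
      have hA1 : A j 1 = bσ (j + 1) := by rw [A_succ, A_zero, mul_one, Nat.add_zero]
      rw [hA1] at hu ⊢
      have hadj : adj (j + 1) j := Or.inr rfl
      obtain ⟨z, hz1, hz2⟩ := Hadj hadj (by rw [← hu, ← hv])
      refine ⟨z, ?_⟩
      rw [hu, hz1]
      simp only [mul_assoc]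

end Braid

lemma Braid.bdesc_eq (k j : ℕ) : bdesc k (j + 1) = Braid.A j (k - j) := by
  unfold bdesc Braid.A Braid.prodσ
  rw [show k + 1 - (j + 1) = k - j by omega]

/-- For a = σ_k⋯σ_{j+1} with k > j, the least common multiple of a and σ_j
with respect to right-divisibility is Δ(a, σ_j) = a σ_j a. -/
theorem braid_lcm_with_generator (k j : ℕ) (h : j < k) :
    RDvd (bdesc k (j + 1)) (bdesc k (j + 1) * bσ j * bdesc k (j + 1)) ∧
    RDvd (bσ j) (bdesc k (j + 1) * bσ j * bdesc k (j + 1)) ∧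
    ∀ x : BraidMonoid, RDvd (bdesc k (j + 1)) x → RDvd (bσ j) x →
      RDvd (bdesc k (j + 1) * bσ j * bdesc k (j + 1)) x := by
  have hb : bdesc k (j + 1) = Braid.A j (k - j) := Braid.bdesc_eq k j
  have hm : 1 ≤ k - j := by omega
  refine ⟨⟨bdesc k (j + 1) * bσ j, rfl⟩, ?_, ?_⟩
  · obtain ⟨c, hc⟩ := Braid.endsj j (k - j) hm
    exact ⟨c, by rw [hb, hc]⟩
  · rintro x ⟨u, hu⟩ ⟨v, hv⟩
    obtain ⟨w, hw⟩ := Braid.main j (k - j) hm x u v (by rw [← hb]; exact hu) hv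
    refine ⟨w, ?_⟩
    rw [hw, hb]

end ArtinStmt
end

section
/- In the positive braid monoid, let a_{j+1} = σ_{i_{j+1}+j}⋯σ_{j+1} and a_j = σ_{i_j−1+j}⋯σ_j with i_{j+1} ≥ i_j ≥ 1 and j ≥ 2. Then a_{j+1} σ_j a_{j+1} = â_j a_j a_{j+1} σ_j, where â_j = σ_{i_{j+1}+j−1}⋯σ_{i_j+j}; moreover â_j letterwise commutes with any element whose letters all have index at most i_{j−1}+j−2 when i_j ≥ i_{j−1}. -/
namespace ArtinStmt

-- basic relation lemma
lemma rel_of {x y : FreeMonoid ℕ} (h : artinRel braidM x y) :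
    (artinCon braidM).mk' x = (artinCon braidM).mk' y :=
  (Con.eq _).mpr (ConGen.Rel.of x y h)

lemma bσ_mul (i l : ℕ) : bσ i * bσ l
    = (artinCon braidM).mk' (FreeMonoid.of i * FreeMonoid.of l) := by
  simp [bσ, gen]

lemma bσ_comm {i l : ℕ} (h : i + 2 ≤ l ∨ l + 2 ≤ i) :
    bσ i * bσ l = bσ l * bσ i := by
  rw [bσ_mul, bσ_mul]
  apply rel_of
  refine ⟨i, l, by omega, ?_, ?_, ?_⟩ <;>
    simp [braidM, altWord, show ¬ i = l by omega, show ¬(i+1 = l ∨ l+1 = i) by omega]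

lemma bσ_braid (i : ℕ) :
    bσ i * bσ (i+1) * bσ i = bσ (i+1) * bσ i * bσ (i+1) := by
  have h1 : bσ i * bσ (i+1) * bσ i
      = (artinCon braidM).mk' (FreeMonoid.of i * (FreeMonoid.of (i+1) * (FreeMonoid.of i * 1))) := by
    simp [bσ, gen, mul_assoc]
  have h2 : bσ (i+1) * bσ i * bσ (i+1)
      = (artinCon braidM).mk' (FreeMonoid.of (i+1) * (FreeMonoid.of i * (FreeMonoid.of (i+1) * 1))) := by
    simp [bσ, gen, mul_assoc]
  rw [h1, h2]
  apply rel_of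
  refine ⟨i, i+1, by omega, ?_, ?_, ?_⟩ <;>
    simp [braidM, altWord, show ¬ i = i + 1 by omega]

lemma bdesc_nil {k j : ℕ} (h : k < j) : bdesc k j = 1 := by
  have : k + 1 - j = 0 := by omega
  simp [bdesc, this]

lemma bdesc_cons {k j : ℕ} (h : j ≤ k + 1) : bdesc (k+1) j = bσ (k+1) * bdesc k j := by
  have h1 : k + 2 - j = (k + 1 - j) + 1 := by omega
  have h2 : j + (k + 1 - j) = k + 1 := by omega
  rw [bdesc, h1, List.range'_1_concat, h2]
  simp [bdesc]

lemma bdesc_last {k j : ℕ} (h : j ≤ k) : bdesc k j = bdesc k (j+1) * bσ j := by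
  have h1 : k + 1 - j = (k - j) + 1 := by omega
  have h2 : k + 1 - (j + 1) = k - j := by omega
  rw [bdesc, h1, List.range'_succ, bdesc, h2]
  simp

lemma bdesc_append {k m j : ℕ} (hj : j ≤ m) (hm : m ≤ k + 1) (h1 : 1 ≤ m) :
    bdesc k m * bdesc (m-1) j = bdesc k j := by
  have e1 : k + 1 - j = (k + 1 - m) + (m - j) := by omega
  have e2 : m - 1 + 1 - j = m - j := by omega
  have e3 : j + (m - j) = m := by omega
  rw [bdesc, bdesc, bdesc, e1, e2, Nat.add_comm (k+1-m) (m-j), ← List.range'_append_1 (s := j) (m := m-j) (n := k+1-m), e3]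
  simp

lemma bdesc_self (j : ℕ) : bdesc j j = bσ j := by
  simp [bdesc, Nat.add_sub_cancel_left, List.range'_one]

lemma bdesc_cons' {k j : ℕ} (h : j ≤ k) (h1 : 1 ≤ k) :
    bdesc k j = bσ k * bdesc (k-1) j := by
  obtain ⟨n, rfl⟩ : ∃ n, k = n + 1 := ⟨k - 1, by omega⟩
  simpa using bdesc_cons (show j ≤ n + 1 by omega)

lemma bσ_bdesc_comm {m k j : ℕ} (h : k + 2 ≤ m ∨ m + 2 ≤ j) :
    bσ m * bdesc k j = bdesc k j * bσ m := by
  refine (Commute.list_prod_right _ _ (fun x hx => ?_)).eq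
  simp only [List.mem_reverse, List.mem_map, List.mem_range'_1] at hx
  obtain ⟨t, ⟨ht1, ht2⟩, rfl⟩ := hx
  exact bσ_comm (by omega)

lemma slide : ∀ k i j, 1 ≤ j → j ≤ i → i < k →
    bσ i * bdesc k j = bdesc k j * bσ (i+1) := by
  intro k
  induction k with
  | zero => intro i j _ _ h; omega
  | succ n IH =>
    intro i j hj1 hji hik
    rw [bdesc_cons (by omega)]
    rcases Nat.lt_or_ge i n with hlt | hge
    · rw [← mul_assoc, bσ_comm (Or.inl (by omega)), mul_assoc, IH i j hj1 hji hlt,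
        ← mul_assoc, mul_assoc]
    · have hin : i = n := by omega
      subst hin
      rw [bdesc_cons' hji (by omega), ← mul_assoc, ← mul_assoc, bσ_braid,
        mul_assoc, mul_assoc, bσ_bdesc_comm (Or.inl (by omega))]
      simp [mul_assoc]

lemma pull {k j : ℕ} (hj : 1 ≤ j) : ∀ s, j + s ≤ k →
    bdesc k j * bdesc (j + s) (j + 1) = bdesc (j + s - 1) j * bdesc k j := by
  intro s
  induction s with
  | zero =>
    intro _
    simp only [Nat.add_zero]
    rw [bdesc_nil (show j < j + 1 by omega), bdesc_nil (show j - 1 < j by omega)]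
    simp
  | succ s IH =>
    intro hs
    have e1 : j + (s + 1) = (j + s) + 1 := by omega
    rw [e1, bdesc_cons (show j + 1 ≤ j + s + 1 by omega), ← mul_assoc,
      ← slide k (j + s) j hj (by omega) (by omega), mul_assoc, IH (by omega),
      ← mul_assoc, ← bdesc_cons' (show j ≤ j + s by omega) (by omega)]
    have e2 : j + s + 1 - 1 = j + s := by omega
    rw [e2]

/-- With a_{j+1} = σ_{i₁+j}⋯σ_{j+1} and a_j = σ_{i₀−1+j}⋯σ_j, where
i₁ ≥ i₀ ≥ 1 and j ≥ 2, one has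
a_{j+1} σ_j a_{j+1} = â_j a_j a_{j+1} σ_j with â_j = σ_{i₁+j−1}⋯σ_{i₀+j};
moreover â_j letterwise commutes with every generator of index at most
im+j−2 whenever im ≤ i₀ (hence with any element whose letters have index at
most im+j−2, where im plays the role of i_{j−1}). -/
theorem braid_hat_identity (j im i₀ i₁ : ℕ)
    (hj : 2 ≤ j) (h0 : 1 ≤ i₀) (h01 : i₀ ≤ i₁) :
    bdesc (i₁ + j) (j + 1) * bσ j * bdesc (i₁ + j) (j + 1) =
      bdesc (i₁ + j - 1) (i₀ + j) * bdesc (i₀ - 1 + j) j *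
        bdesc (i₁ + j) (j + 1) * bσ j ∧
    (im ≤ i₀ → ∀ l, l ≤ im + j - 2 →
      bσ l * bdesc (i₁ + j - 1) (i₀ + j) = bdesc (i₁ + j - 1) (i₀ + j) * bσ l) := by
  constructor
  · have hja : j ≤ i₁ + j := by omega
    have key := pull (k := i₁ + j) (j := j) (by omega) i₁ (by omega)
    have e : j + i₁ = i₁ + j := by omega
    rw [e] at key
    have happ := bdesc_append (k := i₁ + j - 1) (m := i₀ + j) (j := j)
      (by omega) (by omega) (by omega)
    have e2 : i₀ + j - 1 = i₀ - 1 + j := by omega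
    rw [e2] at happ
    calc bdesc (i₁ + j) (j + 1) * bσ j * bdesc (i₁ + j) (j + 1)
        = bdesc (i₁ + j) j * bdesc (i₁ + j) (j + 1) := by rw [← bdesc_last hja]
      _ = bdesc (i₁ + j - 1) j * bdesc (i₁ + j) j := key
      _ = (bdesc (i₁ + j - 1) (i₀ + j) * bdesc (i₀ - 1 + j) j) *
            (bdesc (i₁ + j) (j + 1) * bσ j) := by rw [happ, ← bdesc_last hja]
      _ = _ := (mul_assoc _ _ _).symm
  · intro him l hl
    exact bσ_bdesc_comm (Or.inr (by omega))

end ArtinStmt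
end

section
/- In the positive braid monoid, suppose a_j = σ_{i_j−1+j}⋯σ_j ≠ e and a_{j+1} = σ_{i_{j+1}+j}⋯σ_{j+1} with i_{j+1} ≥ i_j ≥ 1. Then a_{j+1}σ_j = ā_j a_j where ā_j = σ_{i_{j+1}+j}⋯σ_{i_j+j} has length at least 1, and ā_j letterwise commutes with every generator of index at most i_{j−1}+j−2. -/
namespace ArtinStmt

lemma prod_map_bσ (l : List ℕ) : (l.map bσ).prod = (artinCon braidM).mk' (FreeMonoid.ofList l) := by
  induction l with
  | nil => rfl
  | cons a l ih =>
      simp only [List.map_cons, List.prod_cons, ih]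
      rw [show FreeMonoid.ofList (a :: l) = FreeMonoid.of a * FreeMonoid.ofList l from rfl,
        map_mul]
      rfl

lemma bdesc_eq (k j : ℕ) :
    bdesc k j = (artinCon braidM).mk' (FreeMonoid.ofList (List.range' j (k + 1 - j)).reverse) :=
  prod_map_bσ _

lemma comm_gen (l m : ℕ) (h : l + 2 ≤ m) : bσ l * bσ m = bσ m * bσ l := by
  have hne : l ≠ m := by omega
  have hM : braidM l m = 2 := by
    simp only [braidM]; rw [if_neg hne, if_neg]; omega
  have hr : artinRel braidM (altWord l m 2) (altWord m l 2) :=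
    ⟨l, m, hne, by omega, by rw [hM], by rw [hM]⟩
  have h2 : ((altWord l m 2 : FreeMonoid ℕ) : BraidMonoid) = ↑(altWord m l 2) :=
    (Con.eq _).2 (ConGen.Rel.of _ _ hr)
  have e1 : altWord l m 2 = FreeMonoid.of l * FreeMonoid.of m := by simp [altWord]
  have e2 : altWord m l 2 = FreeMonoid.of m * FreeMonoid.of l := by simp [altWord]
  rw [e1, e2, Con.coe_mul, Con.coe_mul] at h2
  exact h2

lemma comm_list (m : ℕ) (l : List ℕ) (h : ∀ x ∈ l, m + 2 ≤ x) :
    bσ m * (l.map bσ).prod = (l.map bσ).prod * bσ m := by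
  induction l with
  | nil => simp
  | cons a l ih =>
      simp only [List.map_cons, List.prod_cons, ← mul_assoc]
      rw [comm_gen m a (h a (by simp)), mul_assoc, ih (fun x hx => h x (by simp [hx])),
        mul_assoc]

lemma bdesc_split (k m j : ℕ) (h0 : 1 ≤ m) (h1 : j ≤ m) (h2 : m ≤ k + 1) :
    bdesc k m * bdesc (m - 1) j = bdesc k j := by
  unfold bdesc
  rw [← List.prod_append, ← List.map_append, ← List.reverse_append]
  congr 2
  have : m - 1 + 1 - j = m - j := by omega
  rw [this]
  have := List.range'_append (s := j) (m := m - j) (n := k + 1 - m) (step := 1)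
  simp only [one_mul, mul_one] at this
  rw [show j + (m - j) = m by omega] at this
  rw [this, show m - j + (k + 1 - m) = k + 1 - j by omega]

/-- With a_{j+1} = σ_{i₁+j}⋯σ_{j+1} ≠ e and a_j = σ_{i₀−1+j}⋯σ_j ≠ e, where
i₁ ≥ i₀ ≥ 1, one has a_{j+1} σ_j = ā_j a_j with ā_j = σ_{i₁+j}⋯σ_{i₀+j} of
length at least 1, and ā_j commutes with every generator of index at most
im+j−2, where im plays the role of i_{j−1} and im ≤ i₀. -/
theorem braid_bar_identity (j im i₀ i₁ : ℕ)
    (hj : 2 ≤ j) (h0 : 1 ≤ i₀) (h01 : i₀ ≤ i₁) (him : im ≤ i₀)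
    (len : BraidMonoid → ℕ)
    (hlen : ∀ w : FreeMonoid ℕ, len ((artinCon braidM).mk' w) = w.length) :
    bdesc (i₁ + j) (j + 1) * bσ j = bdesc (i₁ + j) (i₀ + j) * bdesc (i₀ - 1 + j) j ∧
    1 ≤ len (bdesc (i₁ + j) (i₀ + j)) ∧
    ∀ l, l ≤ im + j - 2 →
      bσ l * bdesc (i₁ + j) (i₀ + j) = bdesc (i₁ + j) (i₀ + j) * bσ l := by
  refine ⟨?_, ?_, ?_⟩
  · have e1 : bσ j = bdesc j j := by
      unfold bdesc
      rw [show j + 1 - j = 1 by omega]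
      simp [List.range'_one]
    have hs := bdesc_split (i₁ + j) (j + 1) j (by omega) (by omega) (by omega)
    rw [show j + 1 - 1 = j by omega] at hs
    rw [e1, hs]
    rw [show i₀ - 1 + j = i₀ + j - 1 by omega]
    rw [bdesc_split (i₁ + j) (i₀ + j) j (by omega) (by omega) (by omega)]
  · rw [bdesc_eq, hlen]
    have : (FreeMonoid.ofList (List.range' (i₀ + j) (i₁ + j + 1 - (i₀ + j))).reverse).length
        = i₁ + j + 1 - (i₀ + j) := by
      show List.length (List.range' (i₀ + j) (i₁ + j + 1 - (i₀ + j))).reverse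
          = i₁ + j + 1 - (i₀ + j)
      simp
    rw [this]; omega
  · intro l hl
    have : ∀ x ∈ (List.range' (i₀ + j) (i₁ + j + 1 - (i₀ + j))).reverse, l + 2 ≤ x := by
      intro x hx
      rw [List.mem_reverse, List.mem_range'_1] at hx
      omega
    exact comm_list l _ this

end ArtinStmt
end
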